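/- Let φ be a structural set in ℝ_{0,m} with m odd. Then for every a ∈ ℝ_{0,m} and every j = 0,...,m, one has Ψⱼ^{φ,φ}(a) = -Ψ_{m-j}^{φ,φ}(a). -/

import Mathlib

open CliffordAlgebra

noncomputable section

/-- The quadratic form of `ℝ_{0,m}`: negative definite on `ℝ^m`. -/
abbrev Qf (m : ℕ) : QuadraticForm ℝ (Fin m → ℝ) :=
  QuadraticMap.weightedSumSquares ℝ (fun _ : Fin m => (-1 : ℝ))

/-- The real Clifford algebra `ℝ_{0,m}`. -/
abbrev Cl (m : ℕ) := CliffordAlgebra (Qf m)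

/-- A structural set: an orthonormal basis `ψ¹,…,ψᵐ` of `ℝᵐ`. -/
def IsStructuralSet {m : ℕ} (ψ : Fin m → (Fin m → ℝ)) : Prop :=
  ∀ i j, (∑ t, ψ i t * ψ j t) = if i = j then (1 : ℝ) else 0

/-- The ordered product `ψ_A = ψ^{j₁} ⋯ ψ^{j_k}` for `A = {j₁ < ⋯ < j_k}`. -/
def prodS {m : ℕ} (ψ : Fin m → (Fin m → ℝ)) (A : Finset (Fin m)) : Cl m :=
  ((A.sort (· ≤ ·)).map (fun i => ι (Qf m) (ψ i))).prod

/-- The operator `Ψ_k^{φ,ψ}(a) = Σ_{|A|=k} φ_A a ψ̂_A`. -/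
def PsiK {m : ℕ} (φ ψ : Fin m → (Fin m → ℝ)) (k : ℕ) (a : Cl m) : Cl m :=
  ∑ A ∈ Finset.univ.filter (fun A : Finset (Fin m) => A.card = k),
    prodS φ A * a * reverse (prodS ψ A)

/-- `Ψ₊ = Σ_{k even} Ψ_k`. -/
def PsiPlus {m : ℕ} (φ ψ : Fin m → (Fin m → ℝ)) (a : Cl m) : Cl m :=
  ∑ k ∈ (Finset.range (m + 1)).filter (fun k => Even k), PsiK φ ψ k a

/-- `Ψ₋ = Σ_{k odd} Ψ_k`. -/
def PsiMinus {m : ℕ} (φ ψ : Fin m → (Fin m → ℝ)) (a : Cl m) : Cl m :=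
  ∑ k ∈ (Finset.range (m + 1)).filter (fun k => Odd k), PsiK φ ψ k a

/-- `Ψ₁^{φ,ψ}(a) = Σⱼ φʲ a ψʲ`. -/
def Psi1 {m : ℕ} (φ ψ : Fin m → (Fin m → ℝ)) (a : Cl m) : Cl m :=
  ∑ j, ι (Qf m) (φ j) * a * ι (Qf m) (ψ j)

/-- The standard basis of `ℝᵐ`. -/
def stdB {m : ℕ} (i : Fin m) : Fin m → ℝ := Pi.single i 1

/-- The basis multivector `e_A`. -/
def eA {m : ℕ} (A : Finset (Fin m)) : Cl m := prodS stdB A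

/-- The element with coefficients `c` in the multivector basis. -/
def toCl {m : ℕ} (c : Finset (Fin m) → ℝ) : Cl m := ∑ A, c A • eA A

/-- The space `ℝ_{0,m}^{(k)}` of `k`-grade multivectors. -/
def gradeK (m k : ℕ) : Submodule ℝ (Cl m) :=
  Submodule.span ℝ {x | ∃ A : Finset (Fin m), A.card = k ∧ x = eA A}

/-- Coefficient functions of `ℝ_{0,m}`-valued maps. -/
abbrev Coef (m : ℕ) := Finset (Fin m) → ℝ

/-- The coefficients of the even part `f₊`. -/
def cEven {m : ℕ} (c : Coef m) : Coef m := fun A => if Even A.card then c A else 0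

/-- The coefficients of the odd part `f₋`. -/
def cOdd {m : ℕ} (c : Coef m) : Coef m := fun A => if Odd A.card then c A else 0

/-- The even part of a Clifford number. -/
def evenPart {m : ℕ} (a : Cl m) : Cl m :=
  (DirectSum.decompose (evenOdd (Qf m)) a 0 : evenOdd (Qf m) 0)

/-- The odd part of a Clifford number. -/
def oddPart {m : ℕ} (a : Cl m) : Cl m :=
  (DirectSum.decompose (evenOdd (Qf m)) a 1 : evenOdd (Qf m) 1)

/-- Partial derivative `∂F/∂xᵢ` of a coefficient function. -/
def pd {m : ℕ} (i : Fin m) (F : (Fin m → ℝ) → Coef m) : (Fin m → ℝ) → Coef m :=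
  fun x => fderiv ℝ F x (Pi.single i 1)

/-- The sandwich operator `φ∂[f]ψ∂ = Σᵢⱼ φⁱ (∂²f/∂xᵢ∂xⱼ) ψʲ` for `f = Σ_A F_A e_A`. -/
def sandwichD {m : ℕ} (φ ψ : Fin m → (Fin m → ℝ)) (F : (Fin m → ℝ) → Coef m)
    (x : Fin m → ℝ) : Cl m :=
  ∑ i, ∑ j, ι (Qf m) (φ i) * toCl (pd i (pd j F) x) * ι (Qf m) (ψ j)

/-- The operator `φ∂[ψ∂[f]] = Σᵢⱼ φⁱ ψʲ ∂²f/∂xᵢ∂xⱼ`. -/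
def ddD {m : ℕ} (φ ψ : Fin m → (Fin m → ℝ)) (F : (Fin m → ℝ) → Coef m)
    (x : Fin m → ℝ) : Cl m :=
  ∑ i, ∑ j, ι (Qf m) (φ i) * (ι (Qf m) (ψ j) * toCl (pd i (pd j F) x))

/-- The componentwise Laplacian `Δf = Σᵢ ∂²f/∂xᵢ²`. -/
def lapD {m : ℕ} (F : (Fin m → ℝ) → Coef m) (x : Fin m → ℝ) : Cl m :=
  ∑ i, toCl (pd i (pd i F) x)

variable {m : ℕ} {φ : Fin m → (Fin m → ℝ)}

def prodL (φ : Fin m → (Fin m → ℝ)) (l : List (Fin m)) : Cl m :=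
  (l.map (fun i => ι (Qf m) (φ i))).prod

lemma prodL_nil : prodL φ [] = 1 := rfl
lemma prodL_cons (x : Fin m) (l : List (Fin m)) :
    prodL φ (x :: l) = ι (Qf m) (φ x) * prodL φ l := by simp [prodL]
lemma prodL_append (l l' : List (Fin m)) :
    prodL φ (l ++ l') = prodL φ l * prodL φ l' := by simp [prodL]

lemma hsq (hφ : IsStructuralSet φ) (i : Fin m) :
    ι (Qf m) (φ i) * ι (Qf m) (φ i) = algebraMap ℝ (Cl m) (-1) := by
  rw [ι_sq_scalar]
  congr 1
  rw [QuadraticMap.weightedSumSquares_apply]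
  have h := hφ i i
  simp only [if_true] at h
  simp only [smul_eq_mul, neg_one_mul]
  rw [Finset.sum_neg_distrib, h]

lemma hanti (hφ : IsStructuralSet φ) {i j : Fin m} (hij : i ≠ j) :
    ι (Qf m) (φ i) * ι (Qf m) (φ j) = -(ι (Qf m) (φ j) * ι (Qf m) (φ i)) := by
  apply ι_mul_ι_comm_of_isOrtho
  rw [QuadraticMap.isOrtho_def]
  simp only [QuadraticMap.weightedSumSquares_apply, smul_eq_mul, neg_one_mul, Pi.add_apply]
  have hc := hφ i j
  rw [if_neg hij] at hc
  have key : ∀ t, -((φ i t + φ j t) * (φ i t + φ j t)) =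
      (-(φ i t * φ i t) + -(φ j t * φ j t)) + (-2) * (φ i t * φ j t) := fun t => by ring
  rw [Finset.sum_congr rfl (fun t _ => key t), Finset.sum_add_distrib,
    Finset.sum_add_distrib, ← Finset.mul_sum, hc, mul_zero, add_zero,
    ← Finset.sum_add_distrib]


lemma perm_smul (hφ : IsStructuralSet φ) {l l' : List (Fin m)} (h : l.Perm l') :
    ∃ ε : ℝ, ε * ε = 1 ∧ prodL φ l = ε • prodL φ l' := by
  induction h with
  | nil => exact ⟨1, by norm_num, by simp⟩
  | cons x h ih =>
    obtain ⟨ε, hε, he⟩ := ih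
    exact ⟨ε, hε, by rw [prodL_cons, prodL_cons, he, mul_smul_comm]⟩
  | swap x y l =>
    by_cases hxy : x = y
    · exact ⟨1, by norm_num, by rw [hxy, one_smul]⟩
    · refine ⟨-1, by norm_num, ?_⟩
      rw [prodL_cons, prodL_cons, prodL_cons, prodL_cons, ← mul_assoc, ← mul_assoc,
        hanti hφ (Ne.symm hxy)]
      simp
  | trans h1 h2 ih1 ih2 =>
    obtain ⟨ε₁, hε₁, he₁⟩ := ih1
    obtain ⟨ε₂, hε₂, he₂⟩ := ih2
    refine ⟨ε₁ * ε₂, by nlinarith, ?_⟩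
    rw [he₁, he₂, smul_smul]

lemma prodL_mul_reverse (hφ : IsStructuralSet φ) (l : List (Fin m)) :
    prodL φ l * prodL φ l.reverse = ((-1 : ℝ) ^ l.length) • 1 := by
  induction l with
  | nil => simp [prodL]
  | cons x l ih =>
    rw [prodL_cons, List.reverse_cons, prodL_append, mul_assoc, ← mul_assoc (prodL φ l), ih]
    have : prodL φ [x] = ι (Qf m) (φ x) := by simp [prodL]
    rw [this, smul_mul_assoc, one_mul, mul_smul_comm, hsq hφ x]
    rw [List.length_cons, pow_succ]
    simp [Algebra.algebraMap_eq_smul_one, smul_smul, mul_comm]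

lemma reverse_prodL (l : List (Fin m)) :
    reverse (R := ℝ) (prodL φ l) = prodL φ l.reverse := by
  induction l with
  | nil => simp [prodL]
  | cons x l ih =>
    rw [prodL_cons, reverse.map_mul, ih, reverse_ι, List.reverse_cons, prodL_append]
    simp [prodL]

lemma reverse_mul_prodL (hφ : IsStructuralSet φ) (l : List (Fin m)) :
    prodL φ l.reverse * prodL φ l = ((-1 : ℝ) ^ l.length) • 1 := by
  have := prodL_mul_reverse hφ l.reverse
  rwa [List.reverse_reverse, List.length_reverse] at this

lemma move (hφ : IsStructuralSet φ) {t : Fin m} {l : List (Fin m)} (ht : t ∉ l) :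
    ι (Qf m) (φ t) * prodL φ l = ((-1 : ℝ) ^ l.length) • (prodL φ l * ι (Qf m) (φ t)) := by
  induction l with
  | nil => simp [prodL]
  | cons x l ih =>
    have htx : t ≠ x := fun h => ht (h ▸ (List.mem_cons_self : x ∈ x :: l))
    have htl : t ∉ l := fun h => ht (List.mem_cons_of_mem x h)
    rw [prodL_cons, ← mul_assoc, hanti hφ htx, neg_mul, mul_assoc, ih htl,
      List.length_cons, pow_succ, mul_comm ((-1:ℝ)^l.length) (-1), ← smul_smul,
      mul_smul_comm, neg_one_smul, ← mul_assoc]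

def omegaL (φ : Fin m → (Fin m → ℝ)) : Cl m :=
  prodL φ ((Finset.univ : Finset (Fin m)).sort (· ≤ ·))

lemma comm_omega (hφ : IsStructuralSet φ) (hm : Odd m) (t : Fin m) :
    ι (Qf m) (φ t) * omegaL φ = omegaL φ * ι (Qf m) (φ t) := by
  set L := (Finset.univ : Finset (Fin m)).sort (· ≤ ·) with hL
  have htL : t ∈ L := (Finset.mem_sort _).2 (Finset.mem_univ t)
  have hnd : L.Nodup := Finset.sort_nodup _ _
  have hperm : L.Perm (t :: L.erase t) := List.perm_cons_erase htL
  obtain ⟨ε, hε, he⟩ := perm_smul hφ hperm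
  have hnotmem : t ∉ L.erase t := hnd.not_mem_erase
  have hlen : (L.erase t).length = m - 1 := by
    rw [List.length_erase_of_mem htL]
    simp [hL]
  have heven : Even (m - 1) := by
    obtain ⟨k, hk⟩ := hm; exact ⟨k, by omega⟩
  have hmove : ι (Qf m) (φ t) * prodL φ (L.erase t) =
      prodL φ (L.erase t) * ι (Qf m) (φ t) := by
    rw [move hφ hnotmem, hlen, heven.neg_one_pow, one_smul]
  rw [show omegaL φ = prodL φ L from rfl, he, prodL_cons, mul_smul_comm, smul_mul_assoc]
  congr 1
  conv_lhs => rw [hmove]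
  rw [← mul_assoc]

lemma span_phi (hφ : IsStructuralSet φ) (hm : Odd m) :
    Submodule.span ℝ (Set.range φ) = ⊤ := by
  have : NeZero m := ⟨by rintro rfl; simp at hm⟩
  have hli : LinearIndependent ℝ φ := by
    rw [Fintype.linearIndependent_iff]
    intro g hg i
    have h0 : ∑ t, (∑ j, g j • φ j) t * φ i t = 0 := by rw [hg]; simp
    rw [Finset.sum_congr rfl (fun t _ => by
      rw [Finset.sum_apply, Finset.sum_mul])] at h0
    rw [Finset.sum_comm] at h0
    have : ∀ j, ∑ t, (g j • φ j) t * φ i t = g j * ∑ t, φ j t * φ i t := by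
      intro j
      rw [Finset.mul_sum]
      exact Finset.sum_congr rfl (fun t _ => by simp [mul_assoc])
    rw [Finset.sum_congr rfl (fun j _ => this j)] at h0
    have h1 : ∑ j, g j * (if j = i then (1:ℝ) else 0) = 0 :=
      (Finset.sum_congr rfl (fun j _ => by rw [hφ j i])).trans h0
    simpa using h1
  have hcard : Fintype.card (Fin m) = Module.finrank ℝ (Fin m → ℝ) := by
    simp [Module.finrank_fin_fun]
  have : Nonempty (Fin m) := ⟨⟨0, Nat.pos_of_ne_zero (NeZero.ne m)⟩⟩
  have hsp := (basisOfLinearIndependentOfCardEqFinrank hli hcard).span_eq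
  rwa [coe_basisOfLinearIndependentOfCardEqFinrank] at hsp

lemma omega_central (hφ : IsStructuralSet φ) (hm : Odd m) (x : Cl m) :
    omegaL φ * x = x * omegaL φ := by
  induction x using CliffordAlgebra.induction with
  | algebraMap r => rw [Algebra.commutes]
  | ι v =>
    have hv : v ∈ Submodule.span ℝ (Set.range φ) := by
      rw [span_phi hφ hm]; trivial
    induction hv using Submodule.span_induction with
    | mem w hw => obtain ⟨t, rfl⟩ := hw; exact (comm_omega hφ hm t).symm
    | zero => simp
    | add w₁ w₂ _ _ h₁ h₂ => rw [map_add, mul_add, add_mul, h₁, h₂]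
    | smul c w _ h => rw [map_smul, mul_smul_comm, smul_mul_assoc, h]
  | mul x y hx hy => rw [← mul_assoc, hx, mul_assoc, hy, mul_assoc]
  | add x y hx hy => rw [mul_add, add_mul, hx, hy]

lemma key (hφ : IsStructuralSet φ) (hm : Odd m) (A : Finset (Fin m)) (a : Cl m) :
    prodS φ Aᶜ * a * reverse (prodS φ Aᶜ) = -(prodS φ A * a * reverse (prodS φ A)) := by
  set sA := A.sort (· ≤ ·) with hsA
  set sC := Aᶜ.sort (· ≤ ·) with hsC
  set L := (Finset.univ : Finset (Fin m)).sort (· ≤ ·) with hLdef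
  have hprodSA : prodS φ A = prodL φ sA := rfl
  have hprodSC : prodS φ Aᶜ = prodL φ sC := rfl
  have hW : omegaL φ = prodL φ L := rfl
  have hLlen : L.length = m := by simp [hLdef]
  have hperm : (sA ++ sC).Perm L := by
    have hval : ((sA ++ sC : List (Fin m)) : Multiset (Fin m)) = (L : Multiset (Fin m)) := by
      have hd : (A.disjUnion Aᶜ disjoint_compl_right).val = (Finset.univ : Finset (Fin m)).val := by
        congr 1
        rw [Finset.disjUnion_eq_union]
        exact Finset.union_compl A
      show (↑sA + ↑sC : Multiset (Fin m)) = _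
      rw [hsA, hsC, hLdef, Finset.sort_eq, Finset.sort_eq, Finset.sort_eq]
      exact hd
    exact Multiset.coe_eq_coe.1 hval
  obtain ⟨ε, hε, hPQ⟩ := perm_smul hφ hperm
  rw [prodL_append] at hPQ
  set P := prodL φ sA
  set Q := prodL φ sC
  set R := prodL φ sA.reverse with hRdef
  set W := prodL φ L with hWdef
  have hRP : R * P = ((-1:ℝ)^A.card) • 1 := by
    have h := reverse_mul_prodL hφ sA
    rwa [hsA, Finset.length_sort] at h
  set c := ((-1:ℝ)^A.card) with hcdef
  have hc : c * c = 1 := by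
    rw [hcdef, ← pow_add]
    exact Even.neg_one_pow ⟨A.card, rfl⟩
  have hQ : Q = (c * ε) • (R * W) := by
    have h1 : R * (P * Q) = ε • (R * W) := by rw [hPQ, mul_smul_comm]
    rw [← mul_assoc, hRP, smul_mul_assoc, one_mul] at h1
    calc Q = c • (c • Q) := by rw [smul_smul, hc, one_smul]
      _ = c • (ε • (R * W)) := by rw [h1]
      _ = (c * ε) • (R * W) := by rw [smul_smul]
  have hrevQ : reverse (R := ℝ) Q = (c * ε) • (prodL φ L.reverse * P) := by
    rw [hQ, map_smul, reverse.map_mul, hRdef, hWdef, reverse_prodL, reverse_prodL,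
      List.reverse_reverse]
  have hce : (c * ε) * (c * ε) = 1 := by
    calc (c * ε) * (c * ε) = (c * c) * (ε * ε) := by ring
      _ = 1 := by rw [hc, hε, one_mul]
  have hWLrev : W * prodL φ L.reverse = (-1 : ℝ) • 1 := by
    rw [hWdef, prodL_mul_reverse hφ, hLlen, Odd.neg_one_pow hm]
  obtain ⟨ε', hε', hR⟩ := perm_smul hφ sA.reverse_perm
  rw [← hRdef] at hR
  have hrevP : reverse (R := ℝ) P = R := by rw [reverse_prodL]
  rw [hprodSC, hprodSA, hrevQ, hrevP, hQ]
  calc ((c * ε) • (R * W)) * a * ((c * ε) • (prodL φ L.reverse * P))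
      = ((c * ε) * (c * ε)) • (R * W * a * (prodL φ L.reverse * P)) := by
        rw [smul_mul_assoc, smul_mul_assoc, mul_smul_comm, smul_smul]
    _ = R * (W * a) * (prodL φ L.reverse * P) := by rw [hce, one_smul, mul_assoc R W a]
    _ = R * (a * W) * (prodL φ L.reverse * P) := by
        rw [show W * a = a * W from omega_central hφ hm a]
    _ = R * a * (W * prodL φ L.reverse) * P := by
        rw [← mul_assoc, ← mul_assoc, mul_assoc (R * a) W, ← mul_assoc]
    _ = -(R * a * P) := by
        rw [hWLrev, mul_smul_comm, smul_mul_assoc, mul_one, neg_smul, one_smul]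
    _ = -(P * a * R) := by
        rw [hR, smul_mul_assoc, smul_mul_assoc, mul_smul_comm]

/-- for a structural set `φ` with `m` odd,
`Ψⱼ^{φ,φ}(a) = -Ψ_{m-j}^{φ,φ}(a)` for all `a` and `j = 0,…,m`. -/
theorem psiK_neg_psiK_compl {m : ℕ} (φ : Fin m → (Fin m → ℝ))
    (hφ : IsStructuralSet φ) (hm : Odd m) (a : Cl m) :
    ∀ j ≤ m, PsiK φ φ j a = -PsiK φ φ (m - j) a := by
  intro j hj
  rw [PsiK, PsiK, ← Finset.sum_neg_distrib]
  refine Finset.sum_nbij' (i := fun A => Aᶜ) (j := fun B => Bᶜ) ?_ ?_ ?_ ?_ ?_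
  · intro A hA
    rw [Finset.mem_filter] at hA ⊢
    refine ⟨Finset.mem_univ _, ?_⟩
    rw [Finset.card_compl, hA.2, Fintype.card_fin]
  · intro B hB
    rw [Finset.mem_filter] at hB ⊢
    refine ⟨Finset.mem_univ _, ?_⟩
    rw [Finset.card_compl, hB.2, Fintype.card_fin]
    omega
  · intro A _; simp
  · intro B _; simp
  · intro A _
    rw [key hφ hm A a, neg_neg]
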